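/- Let r be a rational number such that 171r⁴ - 740r³ + 1356r² - 1200r + 449 ≠ 0, 17r⁴ - 88r³ + 188r² - 192r + 81 ≠ 0, and 6r⁴ - 28r³ + 61r² - 66r + 33 ≠ 0. Define R = (102r⁵ - 525r⁴ + 1138r³ - 1164r² + 456r + 65)/(171r⁴ - 740r³ + 1356r² - 1200r + 449), P = (11r⁴ - 43r³ + 79r² - 73r + 32)/(17r⁴ - 88r³ + 188r² - 192r + 81), Q = (29r⁴ - 138r³ + 271r² - 254r + 98)/(6r⁴ - 28r³ + 61r² - 66r + 33). Then σ₃(1, 1, P, Q, R) = σ₃(1, 1, 1, 2, r) and σ₄(1, 1, P, Q, R) = σ₄(1, 1, 1, 2, r). -/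

import Mathlib

/-- The `k`-th elementary symmetric function of a multiset of rationals
(`esymm s 0 = 1`, and `esymm s k = 0` for `k > card s`). -/
def esymm (s : Multiset ℚ) (k : ℕ) : ℚ := ((s.powersetCard k).map Multiset.prod).sum

/-- Elementary symmetric function with integer index: `0` for negative indices. -/
def esymmZ (s : Multiset ℚ) (k : ℤ) : ℚ := if k < 0 then 0 else esymm s k.toNat

/-- The `k`-th elementary symmetric polynomial evaluated at a tuple. -/
def sigma {n : ℕ} (x : Fin n → ℚ) (k : ℕ) : ℚ := esymm (Multiset.map x Finset.univ.val) k

lemma pc1 (e : ℚ) : Multiset.powersetCard 1 ({e} : Multiset ℚ) = {{e}} := rfl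

lemma esymm3 (a b c d e : ℚ) : esymm {a,b,c,d,e} 3 =
    a*b*c + a*b*d + a*b*e + a*c*d + a*c*e + a*d*e + b*c*d + b*c*e + b*d*e + c*d*e := by
  simp [esymm, Multiset.powersetCard_cons, pc1]
  ring

lemma esymm4 (a b c d e : ℚ) : esymm {a,b,c,d,e} 4 =
    a*b*c*d + a*b*c*e + a*b*d*e + a*c*d*e + b*c*d*e := by
  simp [esymm, Multiset.powersetCard_cons, pc1]
  ring

theorem stmt10 (r : ℚ)
    (h1 : 171 * r ^ 4 - 740 * r ^ 3 + 1356 * r ^ 2 - 1200 * r + 449 ≠ 0)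
    (h2 : 17 * r ^ 4 - 88 * r ^ 3 + 188 * r ^ 2 - 192 * r + 81 ≠ 0)
    (h3 : 6 * r ^ 4 - 28 * r ^ 3 + 61 * r ^ 2 - 66 * r + 33 ≠ 0) :
    let R := (102 * r ^ 5 - 525 * r ^ 4 + 1138 * r ^ 3 - 1164 * r ^ 2 + 456 * r + 65) /
      (171 * r ^ 4 - 740 * r ^ 3 + 1356 * r ^ 2 - 1200 * r + 449)
    let P := (11 * r ^ 4 - 43 * r ^ 3 + 79 * r ^ 2 - 73 * r + 32) /
      (17 * r ^ 4 - 88 * r ^ 3 + 188 * r ^ 2 - 192 * r + 81)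
    let Q := (29 * r ^ 4 - 138 * r ^ 3 + 271 * r ^ 2 - 254 * r + 98) /
      (6 * r ^ 4 - 28 * r ^ 3 + 61 * r ^ 2 - 66 * r + 33)
    esymm {1, 1, P, Q, R} 3 = esymm {1, 1, 1, 2, r} 3 ∧
      esymm {1, 1, P, Q, R} 4 = esymm {1, 1, 1, 2, r} 4 := by
  intro R P Q
  rw [esymm3, esymm3, esymm4, esymm4]
  constructor
  · show _ = _
    simp only [R, P, Q]
    have h1' : r * (r * (r * (r * 171 - 740) + 1356) - 1200) + 449 ≠ 0 := by convert h1 using 1; ring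
    have h2' : r * (r * (r * (r * 17 - 88) + 188) - 192) + 81 ≠ 0 := by convert h2 using 1; ring
    have h3' : r * (r * (r * (r * 6 - 28) + 61) - 66) + 33 ≠ 0 := by convert h3 using 1; ring
    field_simp
    ring
  · show _ = _
    simp only [R, P, Q]
    have h1' : r * (r * (r * (r * 171 - 740) + 1356) - 1200) + 449 ≠ 0 := by convert h1 using 1; ring
    have h2' : r * (r * (r * (r * 17 - 88) + 188) - 192) + 81 ≠ 0 := by convert h2 using 1; ring
    have h3' : r * (r * (r * (r * 6 - 28) + 61) - 66) + 33 ≠ 0 := by convert h3 using 1; ring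
    field_simp
    ring
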